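/- For p ∈ S and v ∈ T_pS set η'_p(v) = p₂·v₁ − p₁·v₂, η''_p(v) = w₂(p)·(Dw₁(p)v) − w₁(p)·(Dw₂(p)v), and θ_p(v) = −w₁(p)·v₁ − w₂(p)·v₂. Then for every smooth u : ℂ² → ℂ, every p ∈ S and every v ∈ T_pS: Du(p)v = (Tu)(p)·η'_p(v) + (Xu)(p)·η''_p(v) + (Υu)(p)·θ_p(v), where Υu = X(Tu) − T(Xu). -/

import Mathlib

open Complex

/-- Wirtinger derivative ∂F/∂z_j at p. -/
noncomputable def wirtZ {n : ℕ} (F : (Fin n → ℂ) → ℂ) (p : Fin n → ℂ) (j : Fin n) : ℂ :=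
  (1/2) * (fderiv ℝ F p (Pi.single j 1) - I * fderiv ℝ F p (Pi.single j I))

/-- Wirtinger derivative ∂F/∂z̄_j at p. -/
noncomputable def wirtZbar {n : ℕ} (F : (Fin n → ℂ) → ℂ) (p : Fin n → ℂ) (j : Fin n) : ℂ :=
  (1/2) * (fderiv ℝ F p (Pi.single j 1) + I * fderiv ℝ F p (Pi.single j I))

/-- The projective dual coordinates w_j(z) = (∂ρ/∂z_j)/(Σ_k z_k ∂ρ/∂z_k). -/
noncomputable def wC {n : ℕ} (ρ : (Fin n → ℂ) → ℝ) (z : Fin n → ℂ) (j : Fin n) : ℂ :=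
  wirtZ (fun q => (ρ q : ℂ)) z j / ∑ k, z k * wirtZ (fun q => (ρ q : ℂ)) z k

/-- The operator T F = w₂ ∂F/∂z₁ − w₁ ∂F/∂z₂ + α₁ ∂F/∂z̄₁ + α₂ ∂F/∂z̄₂. -/
noncomputable def Top2 (ρ : (Fin 2 → ℂ) → ℝ) (α : (Fin 2 → ℂ) → Fin 2 → ℂ)
    (F : (Fin 2 → ℂ) → ℂ) (p : Fin 2 → ℂ) : ℂ :=
  wC ρ p 1 * wirtZ F p 0 - wC ρ p 0 * wirtZ F p 1
    + α p 0 * wirtZbar F p 0 + α p 1 * wirtZbar F p 1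

/-- The operator X F = b₁ ∂F/∂z̄₁ + b₂ ∂F/∂z̄₂. -/
noncomputable def Xop2 (b : (Fin 2 → ℂ) → Fin 2 → ℂ)
    (F : (Fin 2 → ℂ) → ℂ) (p : Fin 2 → ℂ) : ℂ :=
  b p 0 * wirtZbar F p 0 + b p 1 * wirtZbar F p 1

/-- The commutator Υ = [X, T]: ΥF = X(TF) − T(XF). -/
noncomputable def Ups2 (ρ : (Fin 2 → ℂ) → ℝ) (α b : (Fin 2 → ℂ) → Fin 2 → ℂ)
    (F : (Fin 2 → ℂ) → ℂ) (p : Fin 2 → ℂ) : ℂ :=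
  Xop2 b (Top2 ρ α F) p - Top2 ρ α (Xop2 b F) p

/-- η'_p(v) = p₂·v₁ − p₁·v₂. -/
noncomputable def etaP (p v : Fin 2 → ℂ) : ℂ := p 1 * v 0 - p 0 * v 1

/-- η''_p(v) = w₂(p)·(Dw₁(p)v) − w₁(p)·(Dw₂(p)v). -/
noncomputable def etaPP (ρ : (Fin 2 → ℂ) → ℝ) (p v : Fin 2 → ℂ) : ℂ :=
  wC ρ p 1 * fderiv ℝ (fun q => wC ρ q 0) p v - wC ρ p 0 * fderiv ℝ (fun q => wC ρ q 1) p v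

/-- θ_p(v) = −w₁(p)·v₁ − w₂(p)·v₂. -/
noncomputable def thetaF (ρ : (Fin 2 → ℂ) → ℝ) (p v : Fin 2 → ℂ) : ℂ :=
  -(wC ρ p 0) * v 0 - wC ρ p 1 * v 1

/-! ### Auxiliary lemmas -/

local notation "E2" => (Fin 2 → ℂ)

section PartA

lemma vec_decomp (v : E2) :
    v = (v 0).re • (Pi.single 0 1 : E2) + (v 0).im • (Pi.single 0 I : E2)
      + (v 1).re • (Pi.single 1 1 : E2) + (v 1).im • (Pi.single 1 I : E2) := by
  funext j
  fin_cases j <;> simp [Pi.single_apply, Complex.ext_iff]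

lemma clm_decomp (L : E2 →L[ℝ] ℂ) (v : E2) :
    L v = (1/2) * (L (Pi.single 0 1) - I * L (Pi.single 0 I)) * v 0
        + (1/2) * (L (Pi.single 1 1) - I * L (Pi.single 1 I)) * v 1
        + (1/2) * (L (Pi.single 0 1) + I * L (Pi.single 0 I)) * (starRingEnd ℂ) (v 0)
        + (1/2) * (L (Pi.single 1 1) + I * L (Pi.single 1 I)) * (starRingEnd ℂ) (v 1) := by
  conv_lhs => rw [vec_decomp v]
  simp only [map_add, map_smul]
  have e0 : (starRingEnd ℂ) (v 0) = (v 0).re - (v 0).im * I := by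
    simp [Complex.ext_iff]
  have e1 : (starRingEnd ℂ) (v 1) = (v 1).re - (v 1).im * I := by
    simp [Complex.ext_iff]
  have f0 : (v 0 : ℂ) = (v 0).re + (v 0).im * I := by simp [Complex.ext_iff]
  have f1 : (v 1 : ℂ) = (v 1).re + (v 1).im * I := by simp [Complex.ext_iff]
  rw [e0, e1]
  nth_rewrite 3 [f0]
  nth_rewrite 3 [f1]
  simp only [smul_eq_mul, Complex.real_smul]
  ring_nf
  simp [Complex.ext_iff]

/-- Part A : fderiv in terms of Wirtinger derivatives. -/
lemma fderiv_wirt (f : E2 → ℂ) (p v : E2) :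
    fderiv ℝ f p v = wirtZ f p 0 * v 0 + wirtZ f p 1 * v 1
      + wirtZbar f p 0 * (starRingEnd ℂ) (v 0) + wirtZbar f p 1 * (starRingEnd ℂ) (v 1) := by
  rw [wirtZ, wirtZ, wirtZbar, wirtZbar]
  exact clm_decomp (fderiv ℝ f p) v

end PartA

section calc2
variable {f g : E2 → ℂ} {p : E2} {j k : Fin 2}

lemma wirtZ_congr (h : f =ᶠ[nhds p] g) : wirtZ f p j = wirtZ g p j := by
  rw [wirtZ, wirtZ, h.fderiv_eq]

lemma wirtZbar_congr (h : f =ᶠ[nhds p] g) : wirtZbar f p j = wirtZbar g p j := by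
  rw [wirtZbar, wirtZbar, h.fderiv_eq]

lemma wirtZ_add (hf : DifferentiableAt ℝ f p) (hg : DifferentiableAt ℝ g p) :
    wirtZ (fun z => f z + g z) p j = wirtZ f p j + wirtZ g p j := by
  simp only [wirtZ, fderiv_fun_add hf hg]; simp; ring

lemma wirtZbar_add (hf : DifferentiableAt ℝ f p) (hg : DifferentiableAt ℝ g p) :
    wirtZbar (fun z => f z + g z) p j = wirtZbar f p j + wirtZbar g p j := by
  simp only [wirtZbar, fderiv_fun_add hf hg]; simp; ring

lemma wirtZ_sub (hf : DifferentiableAt ℝ f p) (hg : DifferentiableAt ℝ g p) :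
    wirtZ (fun z => f z - g z) p j = wirtZ f p j - wirtZ g p j := by
  simp only [wirtZ, fderiv_fun_sub hf hg]; simp; ring

lemma wirtZbar_sub (hf : DifferentiableAt ℝ f p) (hg : DifferentiableAt ℝ g p) :
    wirtZbar (fun z => f z - g z) p j = wirtZbar f p j - wirtZbar g p j := by
  simp only [wirtZbar, fderiv_fun_sub hf hg]; simp; ring

lemma wirtZ_mul (hf : DifferentiableAt ℝ f p) (hg : DifferentiableAt ℝ g p) :
    wirtZ (fun z => f z * g z) p j = f p * wirtZ g p j + wirtZ f p j * g p := by
  simp only [wirtZ, fderiv_fun_mul hf hg]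
  simp [ContinuousLinearMap.add_apply, ContinuousLinearMap.smul_apply, smul_eq_mul]
  ring

lemma wirtZbar_mul (hf : DifferentiableAt ℝ f p) (hg : DifferentiableAt ℝ g p) :
    wirtZbar (fun z => f z * g z) p j = f p * wirtZbar g p j + wirtZbar f p j * g p := by
  simp only [wirtZbar, fderiv_fun_mul hf hg]
  simp [ContinuousLinearMap.add_apply, ContinuousLinearMap.smul_apply, smul_eq_mul]
  ring

lemma differentiableAt_coord : DifferentiableAt ℝ (fun z : E2 => z k) p :=
  (differentiable_pi.mp differentiable_id k).differentiableAt

lemma fderiv_coord_apply (h : E2) : fderiv ℝ (fun z : E2 => z k) p h = h k := by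
  have : (fun z : E2 => z k) = (ContinuousLinearMap.proj k : E2 →L[ℝ] ℂ) := rfl
  rw [this, ContinuousLinearMap.fderiv]; rfl

lemma wirtZ_coord : wirtZ (fun z : E2 => z k) p j = if k = j then 1 else 0 := by
  simp only [wirtZ, fderiv_coord_apply, Pi.single_apply]
  by_cases h : k = j <;> simp [h]; ring

lemma wirtZbar_coord : wirtZbar (fun z : E2 => z k) p j = 0 := by
  simp only [wirtZbar, fderiv_coord_apply, Pi.single_apply]
  by_cases h : k = j <;> simp [h]

end calc2

section smooth
variable {f : E2 → ℂ} {p : E2} {j k : Fin 2}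

lemma cd_fderiv_apply (hf : ContDiffAt ℝ ((⊤:ℕ∞)) f p) (h : E2) :
    ContDiffAt ℝ ((⊤:ℕ∞)) (fun q => fderiv ℝ f q h) p :=
  (hf.fderiv_right (by norm_cast)).clm_apply contDiffAt_const

lemma cd_wirtZ (hf : ContDiffAt ℝ ((⊤:ℕ∞)) f p) :
    ContDiffAt ℝ ((⊤:ℕ∞)) (fun q => wirtZ f q j) p := by
  unfold wirtZ
  exact (contDiffAt_const.mul ((cd_fderiv_apply hf _).sub
    (contDiffAt_const.mul (cd_fderiv_apply hf _))))

lemma cd_wirtZbar (hf : ContDiffAt ℝ ((⊤:ℕ∞)) f p) :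
    ContDiffAt ℝ ((⊤:ℕ∞)) (fun q => wirtZbar f q j) p := by
  unfold wirtZbar
  exact (contDiffAt_const.mul ((cd_fderiv_apply hf _).add
    (contDiffAt_const.mul (cd_fderiv_apply hf _))))

lemma diff_of_cd {X : Type*} [NormedAddCommGroup X] [NormedSpace ℝ X] {g : E2 → X}
    (hg : ContDiffAt ℝ ((⊤:ℕ∞)) g p) : DifferentiableAt ℝ g p :=
  hg.differentiableAt (by norm_cast)

lemma fderiv_fderiv_comm (hf : ContDiffAt ℝ ((⊤:ℕ∞)) f p) (h₁ h₂ : E2) :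
    fderiv ℝ (fun q => fderiv ℝ f q h₁) p h₂ = fderiv ℝ (fun q => fderiv ℝ f q h₂) p h₁ := by
  have hd : DifferentiableAt ℝ (fderiv ℝ f) p :=
    diff_of_cd (hf.fderiv_right (m := (⊤:ℕ∞)) (by norm_cast))
  have key : ∀ h : E2, fderiv ℝ (fun q => fderiv ℝ f q h) p =
      (fderiv ℝ (fderiv ℝ f) p).flip h := by
    intro h
    have := fderiv_clm_apply (𝕜 := ℝ) (c := fderiv ℝ f) (u := fun _ => h) hd
      (differentiableAt_const h)
    simpa [fderiv_const] using this
  rw [key h₁, key h₂]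
  have hs : IsSymmSndFDerivAt ℝ f p := by
    apply ContDiffAt.isSymmSndFDerivAt (n := ((⊤:ℕ∞) : WithTop ℕ∞)) hf
    rw [minSmoothness_of_isRCLikeNormedField]; exact WithTop.coe_le_coe.mpr le_top
  simpa using hs.eq h₂ h₁

lemma dwirtZ (hf : ContDiffAt ℝ ((⊤:ℕ∞)) f p) (h : E2) :
    fderiv ℝ (fun q => wirtZ f q j) p h
      = (1/2) * (fderiv ℝ (fun q => fderiv ℝ f q (Pi.single j 1)) p h
        - I * fderiv ℝ (fun q => fderiv ℝ f q (Pi.single j I)) p h) := by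
  have hA : DifferentiableAt ℝ (fun q => fderiv ℝ f q (Pi.single j 1)) p :=
    diff_of_cd (cd_fderiv_apply hf _)
  have hB : DifferentiableAt ℝ (fun q => fderiv ℝ f q (Pi.single j I)) p :=
    diff_of_cd (cd_fderiv_apply hf _)
  unfold wirtZ
  rw [fderiv_const_mul (hA.fun_sub (hB.const_mul I)), fderiv_fun_sub hA (hB.const_mul I),
    fderiv_const_mul hB]
  simp

lemma dwirtZbar (hf : ContDiffAt ℝ ((⊤:ℕ∞)) f p) (h : E2) :
    fderiv ℝ (fun q => wirtZbar f q j) p h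
      = (1/2) * (fderiv ℝ (fun q => fderiv ℝ f q (Pi.single j 1)) p h
        + I * fderiv ℝ (fun q => fderiv ℝ f q (Pi.single j I)) p h) := by
  have hA : DifferentiableAt ℝ (fun q => fderiv ℝ f q (Pi.single j 1)) p :=
    diff_of_cd (cd_fderiv_apply hf _)
  have hB : DifferentiableAt ℝ (fun q => fderiv ℝ f q (Pi.single j I)) p :=
    diff_of_cd (cd_fderiv_apply hf _)
  unfold wirtZbar
  rw [fderiv_const_mul (hA.fun_add (hB.const_mul I)), fderiv_fun_add hA (hB.const_mul I),
    fderiv_const_mul hB]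
  simp; ring

lemma wirt_comm1 (hf : ContDiffAt ℝ ((⊤:ℕ∞)) f p) :
    wirtZbar (fun q => wirtZ f q j) p k = wirtZ (fun q => wirtZbar f q k) p j := by
  have L : wirtZbar (fun q => wirtZ f q j) p k
      = (1/2) * (fderiv ℝ (fun q => wirtZ f q j) p (Pi.single k 1)
        + I * fderiv ℝ (fun q => wirtZ f q j) p (Pi.single k I)) := rfl
  have R : wirtZ (fun q => wirtZbar f q k) p j
      = (1/2) * (fderiv ℝ (fun q => wirtZbar f q k) p (Pi.single j 1)
        - I * fderiv ℝ (fun q => wirtZbar f q k) p (Pi.single j I)) := rfl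
  rw [L, R, dwirtZ hf, dwirtZ hf, dwirtZbar hf, dwirtZbar hf,
    fderiv_fderiv_comm hf (Pi.single j 1) (Pi.single k 1),
    fderiv_fderiv_comm hf (Pi.single j I) (Pi.single k 1),
    fderiv_fderiv_comm hf (Pi.single j 1) (Pi.single k I),
    fderiv_fderiv_comm hf (Pi.single j I) (Pi.single k I)]
  ring

lemma wirt_comm2 (hf : ContDiffAt ℝ ((⊤:ℕ∞)) f p) :
    wirtZbar (fun q => wirtZbar f q j) p k = wirtZbar (fun q => wirtZbar f q k) p j := by
  have L : wirtZbar (fun q => wirtZbar f q j) p k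
      = (1/2) * (fderiv ℝ (fun q => wirtZbar f q j) p (Pi.single k 1)
        + I * fderiv ℝ (fun q => wirtZbar f q j) p (Pi.single k I)) := rfl
  have R : wirtZbar (fun q => wirtZbar f q k) p j
      = (1/2) * (fderiv ℝ (fun q => wirtZbar f q k) p (Pi.single j 1)
        + I * fderiv ℝ (fun q => wirtZbar f q k) p (Pi.single j I)) := rfl
  rw [L, R, dwirtZbar hf, dwirtZbar hf, dwirtZbar hf, dwirtZbar hf,
    fderiv_fderiv_comm hf (Pi.single j 1) (Pi.single k 1),
    fderiv_fderiv_comm hf (Pi.single j I) (Pi.single k 1),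
    fderiv_fderiv_comm hf (Pi.single j 1) (Pi.single k I),
    fderiv_fderiv_comm hf (Pi.single j I) (Pi.single k I)]
  ring

end smooth
section PartB
variable {ρ : E2 → ℝ} {p : E2}

lemma fderiv_realToComplex (hρd : DifferentiableAt ℝ ρ p) (h : E2) :
    fderiv ℝ (fun q => ((ρ q : ℝ) : ℂ)) p h = ((fderiv ℝ ρ p h : ℝ) : ℂ) := by
  have : fderiv ℝ (fun q => ((ρ q : ℝ) : ℂ)) p = Complex.ofRealCLM.comp (fderiv ℝ ρ p) :=
    (Complex.ofRealCLM.hasFDerivAt.comp p hρd.hasFDerivAt).fderiv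
  rw [this]; rfl

lemma wirtZbar_real_conj (hρd : DifferentiableAt ℝ ρ p) (j : Fin 2) :
    wirtZbar (fun q => ((ρ q : ℝ) : ℂ)) p j
      = (starRingEnd ℂ) (wirtZ (fun q => ((ρ q : ℝ) : ℂ)) p j) := by
  rw [wirtZ, wirtZbar, fderiv_realToComplex hρd, fderiv_realToComplex hρd]
  simp [Complex.ext_iff]

lemma cd_realToComplex (hρ : ContDiff ℝ ((⊤:ℕ∞)) ρ) :
    ContDiffAt ℝ ((⊤:ℕ∞)) (fun q => ((ρ q : ℝ) : ℂ)) p :=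
  (Complex.ofRealCLM.contDiff.comp hρ).contDiffAt

/-- Tangential derivative of a function vanishing on `S` is zero. -/
lemma tangent_deriv_zero {S : Set E2} (hρ : ContDiff ℝ ((⊤:ℕ∞)) ρ) (hS : S = ρ ⁻¹' {0})
    {f : E2 → ℂ} (hfd : DifferentiableAt ℝ f p) (hf0 : ∀ q ∈ S, f q = 0)
    (hp : p ∈ S) (hL : fderiv ℝ ρ p ≠ 0) {v : E2} (hv : fderiv ℝ ρ p v = 0) :
    fderiv ℝ f p v = 0 := by
  have hρp : ρ p = 0 := by rw [hS] at hp; exact hp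
  set L := fderiv ℝ ρ p with hLdef
  have hstrict : HasStrictFDerivAt ρ L p :=
    hρ.contDiffAt.hasStrictFDerivAt (by norm_cast)
  obtain ⟨u, hu⟩ : ∃ u, L u ≠ 0 := by
    by_contra hc
    push_neg at hc
    exact hL (ContinuousLinearMap.ext fun x => by simp [hc x])
  have hsurj : L.range = ⊤ := by
    rw [LinearMap.range_eq_top]
    intro x
    exact ⟨(x / L u) • u, by simp [map_smul]; field_simp⟩
  set γ : L.ker → E2 := hstrict.implicitFunction ρ L hsurj (ρ p) with hγdef
  have hγ0 : γ 0 = p := hstrict.implicitFunction_apply_image hsurj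
  have hdγ : HasStrictFDerivAt γ (L.ker).subtypeL 0 := by
    have := hstrict.to_implicitFunction hsurj
    convert this
  have hev : ∀ᶠ y : L.ker in nhds 0, ρ (γ y) = 0 := by
    have h1 := hstrict.map_implicitFunction_eq hsurj
    have h2 : Filter.Tendsto (fun y : L.ker => ((ρ p), y)) (nhds 0)
        (nhds ((ρ p), (0 : L.ker))) :=
      tendsto_const_nhds.prodMk_nhds Filter.tendsto_id
    filter_upwards [h2.eventually h1] with y hy
    rw [hγdef]
    rw [hy, hρp]
  have hfγ : (f ∘ γ) =ᶠ[nhds 0] (fun _ => (0:ℂ)) := by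
    filter_upwards [hev] with y hy
    exact hf0 _ (by rw [hS]; exact hy)
  have hfd' : HasFDerivAt f (fderiv ℝ f p) (γ 0) := by
    rw [hγ0]; exact hfd.hasFDerivAt
  have h1 : HasFDerivAt (f ∘ γ)
      ((fderiv ℝ f p).comp (L.ker).subtypeL) 0 :=
    HasFDerivAt.comp (0 : L.ker) hfd' hdγ.hasFDerivAt
  have h2 : HasFDerivAt (f ∘ γ) 0 0 :=
    (hasFDerivAt_const (𝕜 := ℝ) (0:ℂ) (0 : L.ker)).congr_of_eventuallyEq hfγ
  have h3 := h1.unique h2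
  have h4 := congrArg (fun (M : (L.ker) →L[ℝ] ℂ) => M ⟨v, hv⟩) h3
  simpa using h4

/-- Tangential vanishing along complexified tangent vectors. -/
lemma tangential_vanish {S : Set E2} (hρ : ContDiff ℝ ((⊤:ℕ∞)) ρ) (hS : S = ρ ⁻¹' {0})
    {f : E2 → ℂ} (hfd : DifferentiableAt ℝ f p) (hf0 : ∀ q ∈ S, f q = 0)
    (hp : p ∈ S) (hL : fderiv ℝ ρ p ≠ 0) (ζ ξ : Fin 2 → ℂ)
    (htan : ζ 0 * wirtZ (fun q => ((ρ q : ℝ) : ℂ)) p 0 + ζ 1 * wirtZ (fun q => ((ρ q : ℝ) : ℂ)) p 1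
      + ξ 0 * wirtZbar (fun q => ((ρ q : ℝ) : ℂ)) p 0
      + ξ 1 * wirtZbar (fun q => ((ρ q : ℝ) : ℂ)) p 1 = 0) :
    ζ 0 * wirtZ f p 0 + ζ 1 * wirtZ f p 1
      + ξ 0 * wirtZbar f p 0 + ξ 1 * wirtZbar f p 1 = 0 := by
  have hρd : DifferentiableAt ℝ ρ p := hρ.differentiable (by norm_cast) p
  set r : E2 := fun j => (ζ j + (starRingEnd ℂ) (ξ j)) / 2 with hrdef
  set s : E2 := fun j => (ζ j - (starRingEnd ℂ) (ξ j)) * (-I / 2) with hsdef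
  have hrs : ∀ j, r j + I * s j = ζ j := by
    intro j; rw [hrdef, hsdef]
    linear_combination (-(ζ j - (starRingEnd ℂ) (ξ j))/2) * Complex.I_sq
  have hrs' : ∀ j, (starRingEnd ℂ) (r j) + I * (starRingEnd ℂ) (s j) = ξ j := by
    intro j; rw [hrdef, hsdef]
    simp only [map_div₀, map_mul, map_sub, map_add, Complex.conj_conj, Complex.conj_I,
      map_neg, Complex.conj_ofNat]
    linear_combination (((starRingEnd ℂ) (ζ j) - ξ j)/2) * Complex.I_sq
  -- the complexified ρ–derivative of a real vector is real
  have keyreal : ∀ t : E2,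
      wirtZ (fun q => ((ρ q : ℝ) : ℂ)) p 0 * t 0 + wirtZ (fun q => ((ρ q : ℝ) : ℂ)) p 1 * t 1
        + wirtZbar (fun q => ((ρ q : ℝ) : ℂ)) p 0 * (starRingEnd ℂ) (t 0)
        + wirtZbar (fun q => ((ρ q : ℝ) : ℂ)) p 1 * (starRingEnd ℂ) (t 1)
        = ((fderiv ℝ ρ p t : ℝ) : ℂ) := by
    intro t
    rw [← fderiv_wirt, fderiv_realToComplex hρd]
  have hsplit :
      ((fderiv ℝ ρ p r : ℝ) : ℂ) + I * ((fderiv ℝ ρ p s : ℝ) : ℂ) = 0 := by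
    rw [← keyreal r, ← keyreal s, ← htan]
    have e0 := hrs 0; have e1 := hrs 1; have f0 := hrs' 0; have f1 := hrs' 1
    linear_combination (wirtZ (fun q => ((ρ q : ℝ) : ℂ)) p 0) * e0
      + (wirtZ (fun q => ((ρ q : ℝ) : ℂ)) p 1) * e1
      + (wirtZbar (fun q => ((ρ q : ℝ) : ℂ)) p 0) * f0
      + (wirtZbar (fun q => ((ρ q : ℝ) : ℂ)) p 1) * f1
  have hr0 : fderiv ℝ ρ p r = 0 := by
    have := hsplit
    rw [Complex.ext_iff] at this
    simpa using this.1
  have hs0 : fderiv ℝ ρ p s = 0 := by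
    have := hsplit
    rw [Complex.ext_iff] at this
    simpa using this.2
  have hfr := tangent_deriv_zero hρ hS hfd hf0 hp hL hr0
  have hfs := tangent_deriv_zero hρ hS hfd hf0 hp hL hs0
  rw [fderiv_wirt] at hfr hfs
  have e0 := hrs 0; have e1 := hrs 1; have f0 := hrs' 0; have f1 := hrs' 1
  calc ζ 0 * wirtZ f p 0 + ζ 1 * wirtZ f p 1 + ξ 0 * wirtZbar f p 0 + ξ 1 * wirtZbar f p 1
      = (wirtZ f p 0 * r 0 + wirtZ f p 1 * r 1 + wirtZbar f p 0 * (starRingEnd ℂ) (r 0)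
          + wirtZbar f p 1 * (starRingEnd ℂ) (r 1))
        + I * (wirtZ f p 0 * s 0 + wirtZ f p 1 * s 1 + wirtZbar f p 0 * (starRingEnd ℂ) (s 0)
          + wirtZbar f p 1 * (starRingEnd ℂ) (s 1)) := by
        linear_combination (-(wirtZ f p 0)) * e0 + (-(wirtZ f p 1)) * e1
          + (-(wirtZbar f p 0)) * f0 + (-(wirtZbar f p 1)) * f1
    _ = 0 := by linear_combination hfr + I * hfs
end PartB
section combs
variable {f1 f2 f3 f4 g1 g2 g3 g4 : E2 → ℂ} {p : E2} {k : Fin 2}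

lemma wirtZbar_comb4 (h1 : DifferentiableAt ℝ f1 p) (h2 : DifferentiableAt ℝ f2 p)
    (h3 : DifferentiableAt ℝ f3 p) (h4 : DifferentiableAt ℝ f4 p)
    (k1 : DifferentiableAt ℝ g1 p) (k2 : DifferentiableAt ℝ g2 p)
    (k3 : DifferentiableAt ℝ g3 p) (k4 : DifferentiableAt ℝ g4 p) :
    wirtZbar (fun z => f1 z * g1 z - f2 z * g2 z + f3 z * g3 z + f4 z * g4 z) p k
      = f1 p * wirtZbar g1 p k + wirtZbar f1 p k * g1 p
        - (f2 p * wirtZbar g2 p k + wirtZbar f2 p k * g2 p)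
        + (f3 p * wirtZbar g3 p k + wirtZbar f3 p k * g3 p)
        + (f4 p * wirtZbar g4 p k + wirtZbar f4 p k * g4 p) := by
  rw [wirtZbar_add (((h1.fun_mul k1).fun_sub (h2.fun_mul k2)).fun_add (h3.fun_mul k3)) (h4.fun_mul k4),
    wirtZbar_add ((h1.fun_mul k1).fun_sub (h2.fun_mul k2)) (h3.fun_mul k3),
    wirtZbar_sub (h1.fun_mul k1) (h2.fun_mul k2),
    wirtZbar_mul h1 k1, wirtZbar_mul h2 k2, wirtZbar_mul h3 k3, wirtZbar_mul h4 k4]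

lemma wirtZ_comb2 (h1 : DifferentiableAt ℝ f1 p) (h2 : DifferentiableAt ℝ f2 p)
    (k1 : DifferentiableAt ℝ g1 p) (k2 : DifferentiableAt ℝ g2 p) :
    wirtZ (fun z => f1 z * g1 z + f2 z * g2 z) p k
      = f1 p * wirtZ g1 p k + wirtZ f1 p k * g1 p
        + (f2 p * wirtZ g2 p k + wirtZ f2 p k * g2 p) := by
  rw [wirtZ_add (h1.fun_mul k1) (h2.fun_mul k2), wirtZ_mul h1 k1, wirtZ_mul h2 k2]

lemma wirtZbar_comb2 (h1 : DifferentiableAt ℝ f1 p) (h2 : DifferentiableAt ℝ f2 p)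
    (k1 : DifferentiableAt ℝ g1 p) (k2 : DifferentiableAt ℝ g2 p) :
    wirtZbar (fun z => f1 z * g1 z + f2 z * g2 z) p k
      = f1 p * wirtZbar g1 p k + wirtZbar f1 p k * g1 p
        + (f2 p * wirtZbar g2 p k + wirtZbar f2 p k * g2 p) := by
  rw [wirtZbar_add (h1.fun_mul k1) (h2.fun_mul k2), wirtZbar_mul h1 k1, wirtZbar_mul h2 k2]

end combs

section PartC

variable {ρ : E2 → ℝ} {α b : E2 → Fin 2 → ℂ} {p : E2}

lemma den_eq (z : E2) : (∑ k, z k * wirtZ (fun q => ((ρ q : ℝ) : ℂ)) z k)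
    = z 0 * wirtZ (fun q => ((ρ q : ℝ) : ℂ)) z 0 + z 1 * wirtZ (fun q => ((ρ q : ℝ) : ℂ)) z 1 :=
  Fin.sum_univ_two _

lemma cd_wC (hρ : ContDiff ℝ ((⊤:ℕ∞)) ρ)
    (hden : (∑ k, p k * wirtZ (fun q => ((ρ q : ℝ) : ℂ)) p k) ≠ 0) (j : Fin 2) :
    ContDiffAt ℝ ((⊤:ℕ∞)) (fun z => wC ρ z j) p := by
  have hnum : ∀ i : Fin 2, ContDiffAt ℝ ((⊤:ℕ∞)) (fun z => wirtZ (fun q => ((ρ q : ℝ) : ℂ)) z i) p :=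
    fun i => cd_wirtZ (cd_realToComplex hρ)
  have hcoord : ∀ i : Fin 2, ContDiffAt ℝ ((⊤:ℕ∞)) (fun z : E2 => z i) p :=
    fun i => (contDiff_pi.1 contDiff_id i).contDiffAt
  have hden_cd : ContDiffAt ℝ ((⊤:ℕ∞))
      (fun z => (∑ k, z k * wirtZ (fun q => ((ρ q : ℝ) : ℂ)) z k)) p := by
    have : (fun z : E2 => (∑ k, z k * wirtZ (fun q => ((ρ q : ℝ) : ℂ)) z k))
        = fun z => z 0 * wirtZ (fun q => ((ρ q : ℝ) : ℂ)) z 0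
          + z 1 * wirtZ (fun q => ((ρ q : ℝ) : ℂ)) z 1 := by
      funext z; exact den_eq z
    rw [this]
    exact ((hcoord 0).mul (hnum 0)).add ((hcoord 1).mul (hnum 1))
  have hwc : (fun z => wC ρ z j) = fun z => (wirtZ (fun q => ((ρ q : ℝ) : ℂ)) z j)
      / (∑ k, z k * wirtZ (fun q => ((ρ q : ℝ) : ℂ)) z k) := rfl
  rw [hwc]
  simp only [div_eq_mul_inv]
  exact (hnum j).mul (hden_cd.inv hden)

/-- Expansion of the commutator Υ at a point of S. -/
lemma ups2_expand (hρ : ContDiff ℝ ((⊤:ℕ∞)) ρ)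
    (hα : ContDiff ℝ ((⊤:ℕ∞)) α) (hb : ContDiff ℝ ((⊤:ℕ∞)) b)
    (hden : (∑ k, p k * wirtZ (fun q => ((ρ q : ℝ) : ℂ)) p k) ≠ 0)
    (hXw1p : Xop2 b (fun z => wC ρ z 0) p = p 1)
    (hXw2p : Xop2 b (fun z => wC ρ z 1) p = -(p 0))
    (u : E2 → ℂ) (hu : ContDiffAt ℝ ((⊤:ℕ∞)) u p) :
    Ups2 ρ α b u p = -(p 0) * wirtZ u p 0 - p 1 * wirtZ u p 1
      + (Xop2 b (fun z => α z 0) p - Top2 ρ α (fun z => b z 0) p) * wirtZbar u p 0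
      + (Xop2 b (fun z => α z 1) p - Top2 ρ α (fun z => b z 1) p) * wirtZbar u p 1 := by
  -- differentiability facts
  have hW : ∀ j : Fin 2, DifferentiableAt ℝ (fun z => wC ρ z j) p :=
    fun j => diff_of_cd (cd_wC hρ hden j)
  have hA : ∀ j : Fin 2, DifferentiableAt ℝ (fun z => α z j) p :=
    fun j => ((contDiff_pi.1 hα j).differentiable (by norm_cast)).differentiableAt
  have hB : ∀ j : Fin 2, DifferentiableAt ℝ (fun z => b z j) p :=
    fun j => ((contDiff_pi.1 hb j).differentiable (by norm_cast)).differentiableAt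
  have hZ : ∀ j : Fin 2, DifferentiableAt ℝ (fun z => wirtZ u z j) p :=
    fun j => diff_of_cd (cd_wirtZ hu)
  have hZb : ∀ j : Fin 2, DifferentiableAt ℝ (fun z => wirtZbar u z j) p :=
    fun j => diff_of_cd (cd_wirtZbar hu)
  -- expand X(Tu)
  have eT : (Top2 ρ α u) = fun z => (fun z => wC ρ z 1) z * (fun z => wirtZ u z 0) z
      - (fun z => wC ρ z 0) z * (fun z => wirtZ u z 1) z
      + (fun z => α z 0) z * (fun z => wirtZbar u z 0) z
      + (fun z => α z 1) z * (fun z => wirtZbar u z 1) z := rfl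
  have eX : (Xop2 b u) = fun z => (fun z => b z 0) z * (fun z => wirtZbar u z 0) z
      + (fun z => b z 1) z * (fun z => wirtZbar u z 1) z := rfl
  have hXT : ∀ k : Fin 2, wirtZbar (Top2 ρ α u) p k
      = wC ρ p 1 * wirtZbar (fun z => wirtZ u z 0) p k
        + wirtZbar (fun z => wC ρ z 1) p k * wirtZ u p 0
        - (wC ρ p 0 * wirtZbar (fun z => wirtZ u z 1) p k
          + wirtZbar (fun z => wC ρ z 0) p k * wirtZ u p 1)
        + (α p 0 * wirtZbar (fun z => wirtZbar u z 0) p k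
          + wirtZbar (fun z => α z 0) p k * wirtZbar u p 0)
        + (α p 1 * wirtZbar (fun z => wirtZbar u z 1) p k
          + wirtZbar (fun z => α z 1) p k * wirtZbar u p 1) := by
    intro k
    rw [eT, wirtZbar_comb4 (hW 1) (hW 0) (hA 0) (hA 1) (hZ 0) (hZ 1) (hZb 0) (hZb 1)]
  have hTX1 : ∀ k : Fin 2, wirtZ (Xop2 b u) p k
      = b p 0 * wirtZ (fun z => wirtZbar u z 0) p k
        + wirtZ (fun z => b z 0) p k * wirtZbar u p 0
        + (b p 1 * wirtZ (fun z => wirtZbar u z 1) p k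
          + wirtZ (fun z => b z 1) p k * wirtZbar u p 1) := by
    intro k
    rw [eX, wirtZ_comb2 (hB 0) (hB 1) (hZb 0) (hZb 1)]
  have hTX2 : ∀ k : Fin 2, wirtZbar (Xop2 b u) p k
      = b p 0 * wirtZbar (fun z => wirtZbar u z 0) p k
        + wirtZbar (fun z => b z 0) p k * wirtZbar u p 0
        + (b p 1 * wirtZbar (fun z => wirtZbar u z 1) p k
          + wirtZbar (fun z => b z 1) p k * wirtZbar u p 1) := by
    intro k
    rw [eX, wirtZbar_comb2 (hB 0) (hB 1) (hZb 0) (hZb 1)]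
  -- symmetry of second derivatives
  have comm1 : ∀ j k : Fin 2, wirtZbar (fun q => wirtZ u q j) p k
      = wirtZ (fun q => wirtZbar u q k) p j := fun j k => wirt_comm1 hu
  have comm2 : ∀ j k : Fin 2, wirtZbar (fun q => wirtZbar u q j) p k
      = wirtZbar (fun q => wirtZbar u q k) p j := fun j k => wirt_comm2 hu
  have expand : Ups2 ρ α b u p
      = b p 0 * wirtZbar (Top2 ρ α u) p 0 + b p 1 * wirtZbar (Top2 ρ α u) p 1
        - (wC ρ p 1 * wirtZ (Xop2 b u) p 0 - wC ρ p 0 * wirtZ (Xop2 b u) p 1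
          + α p 0 * wirtZbar (Xop2 b u) p 0 + α p 1 * wirtZbar (Xop2 b u) p 1) := rfl
  rw [expand, hXT 0, hXT 1, hTX1 0, hTX1 1, hTX2 0, hTX2 1]
  have hXw1p' : b p 0 * wirtZbar (fun z => wC ρ z 0) p 0
      + b p 1 * wirtZbar (fun z => wC ρ z 0) p 1 = p 1 := hXw1p
  have hXw2p' : b p 0 * wirtZbar (fun z => wC ρ z 1) p 0
      + b p 1 * wirtZbar (fun z => wC ρ z 1) p 1 = -(p 0) := hXw2p
  have hXa : ∀ j : Fin 2, Xop2 b (fun z => α z j) p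
      = b p 0 * wirtZbar (fun z => α z j) p 0 + b p 1 * wirtZbar (fun z => α z j) p 1 :=
    fun j => rfl
  have hTb : ∀ j : Fin 2, Top2 ρ α (fun z => b z j) p
      = wC ρ p 1 * wirtZ (fun z => b z j) p 0 - wC ρ p 0 * wirtZ (fun z => b z j) p 1
        + α p 0 * wirtZbar (fun z => b z j) p 0 + α p 1 * wirtZbar (fun z => b z j) p 1 :=
    fun j => rfl
  rw [hXa 0, hXa 1, hTb 0, hTb 1,
    comm1 0 0, comm1 0 1, comm1 1 0, comm1 1 1,
    comm2 0 1, comm2 1 0]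
  linear_combination wirtZ u p 0 * hXw2p' - wirtZ u p 1 * hXw1p'

end PartC
section PartD
variable {ρ : E2 → ℝ} {α b : E2 → Fin 2 → ℂ} {p : E2} {S : Set E2}

lemma sumpw (hden : (∑ k, p k * wirtZ (fun q => ((ρ q : ℝ) : ℂ)) p k) ≠ 0) :
    p 0 * wC ρ p 0 + p 1 * wC ρ p 1 = 1 := by
  have e := den_eq (ρ := ρ) p
  rw [e] at hden
  have h0 : wC ρ p 0 = wirtZ (fun q => ((ρ q : ℝ) : ℂ)) p 0
      / (∑ k, p k * wirtZ (fun q => ((ρ q : ℝ) : ℂ)) p k) := rfl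
  have h1 : wC ρ p 1 = wirtZ (fun q => ((ρ q : ℝ) : ℂ)) p 1
      / (∑ k, p k * wirtZ (fun q => ((ρ q : ℝ) : ℂ)) p k) := rfl
  rw [h0, h1, e]
  field_simp

lemma t_tangent (hden : (∑ k, p k * wirtZ (fun q => ((ρ q : ℝ) : ℂ)) p k) ≠ 0)
    (hαp : α p 0 * wirtZbar (fun q => ((ρ q : ℝ) : ℂ)) p 0
      + α p 1 * wirtZbar (fun q => ((ρ q : ℝ) : ℂ)) p 1 = 0) :
    wC ρ p 1 * wirtZ (fun q => ((ρ q : ℝ) : ℂ)) p 0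
      - wC ρ p 0 * wirtZ (fun q => ((ρ q : ℝ) : ℂ)) p 1
      + α p 0 * wirtZbar (fun q => ((ρ q : ℝ) : ℂ)) p 0
      + α p 1 * wirtZbar (fun q => ((ρ q : ℝ) : ℂ)) p 1 = 0 := by
  have e := den_eq (ρ := ρ) p
  rw [e] at hden
  have h0 : wC ρ p 0 = wirtZ (fun q => ((ρ q : ℝ) : ℂ)) p 0
      / (∑ k, p k * wirtZ (fun q => ((ρ q : ℝ) : ℂ)) p k) := rfl
  have h1 : wC ρ p 1 = wirtZ (fun q => ((ρ q : ℝ) : ℂ)) p 1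
      / (∑ k, p k * wirtZ (fun q => ((ρ q : ℝ) : ℂ)) p k) := rfl
  have hcancel : wC ρ p 1 * wirtZ (fun q => ((ρ q : ℝ) : ℂ)) p 0
      - wC ρ p 0 * wirtZ (fun q => ((ρ q : ℝ) : ℂ)) p 1 = 0 := by
    rw [h0, h1, e]; field_simp; ring
  linear_combination hcancel + hαp

lemma cd_den (hρ : ContDiff ℝ ((⊤:ℕ∞)) ρ) :
    ContDiffAt ℝ ((⊤:ℕ∞)) (fun z => (∑ k, z k * wirtZ (fun q => ((ρ q : ℝ) : ℂ)) z k)) p := by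
  have hnum : ∀ i : Fin 2, ContDiffAt ℝ ((⊤:ℕ∞)) (fun z => wirtZ (fun q => ((ρ q : ℝ) : ℂ)) z i) p :=
    fun i => cd_wirtZ (cd_realToComplex hρ)
  have hcoord : ∀ i : Fin 2, ContDiffAt ℝ ((⊤:ℕ∞)) (fun z : E2 => z i) p :=
    fun i => (contDiff_pi.1 contDiff_id i).contDiffAt
  have : (fun z : E2 => (∑ k, z k * wirtZ (fun q => ((ρ q : ℝ) : ℂ)) z k))
      = fun z => z 0 * wirtZ (fun q => ((ρ q : ℝ) : ℂ)) z 0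
        + z 1 * wirtZ (fun q => ((ρ q : ℝ) : ℂ)) z 1 := by
    funext z; exact den_eq z
  rw [this]
  exact ((hcoord 0).mul (hnum 0)).add ((hcoord 1).mul (hnum 1))

lemma num_ev_eq (hρ : ContDiff ℝ ((⊤:ℕ∞)) ρ)
    (hden : (∑ k, p k * wirtZ (fun q => ((ρ q : ℝ) : ℂ)) p k) ≠ 0) (j : Fin 2) :
    (fun z => wirtZ (fun q => ((ρ q : ℝ) : ℂ)) z j)
      =ᶠ[nhds p] (fun z => wC ρ z j * (∑ k, z k * wirtZ (fun q => ((ρ q : ℝ) : ℂ)) z k)) := by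
  have hc : ContinuousAt (fun z => (∑ k, z k * wirtZ (fun q => ((ρ q : ℝ) : ℂ)) z k)) p :=
    (cd_den hρ).continuousAt
  have hne : ∀ᶠ z in nhds p, (∑ k, z k * wirtZ (fun q => ((ρ q : ℝ) : ℂ)) z k) ≠ 0 :=
    hc.eventually_ne hden
  filter_upwards [hne] with z hz
  rw [wC, div_mul_cancel₀ _ hz]

/-- The key identity  c·∂̄ρ = Σ p_k ∂_k ρ  at p ∈ S. -/
lemma keyC (hρ : ContDiff ℝ ((⊤:ℕ∞)) ρ) (hS : S = ρ ⁻¹' {0})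
    (hα : ContDiff ℝ ((⊤:ℕ∞)) α) (hb : ContDiff ℝ ((⊤:ℕ∞)) b)
    (hp : p ∈ S) (hDρp : fderiv ℝ ρ p ≠ 0)
    (hden : (∑ k, p k * wirtZ (fun q => ((ρ q : ℝ) : ℂ)) p k) ≠ 0)
    (hαtan : ∀ q ∈ S, α q 0 * wirtZbar (fun x => ((ρ x : ℝ) : ℂ)) q 0
      + α q 1 * wirtZbar (fun x => ((ρ x : ℝ) : ℂ)) q 1 = 0)
    (hbtan : ∀ q ∈ S, b q 0 * wirtZbar (fun x => ((ρ x : ℝ) : ℂ)) q 0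
      + b q 1 * wirtZbar (fun x => ((ρ x : ℝ) : ℂ)) q 1 = 0)
    (hXw1p : Xop2 b (fun z => wC ρ z 0) p = p 1)
    (hXw2p : Xop2 b (fun z => wC ρ z 1) p = -(p 0)) :
    (Xop2 b (fun z => α z 0) p - Top2 ρ α (fun z => b z 0) p)
        * wirtZbar (fun q => ((ρ q : ℝ) : ℂ)) p 0
      + (Xop2 b (fun z => α z 1) p - Top2 ρ α (fun z => b z 1) p)
        * wirtZbar (fun q => ((ρ q : ℝ) : ℂ)) p 1
      = (∑ k, p k * wirtZ (fun q => ((ρ q : ℝ) : ℂ)) p k) := by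
  have hρc : ContDiffAt ℝ ((⊤:ℕ∞)) (fun q => ((ρ q : ℝ) : ℂ)) p := cd_realToComplex hρ
  have hA : ∀ j : Fin 2, DifferentiableAt ℝ (fun z => α z j) p :=
    fun j => ((contDiff_pi.1 hα j).differentiable (by norm_cast)).differentiableAt
  have hB : ∀ j : Fin 2, DifferentiableAt ℝ (fun z => b z j) p :=
    fun j => ((contDiff_pi.1 hb j).differentiable (by norm_cast)).differentiableAt
  have hRb : ∀ j : Fin 2, DifferentiableAt ℝ
      (fun z => wirtZbar (fun q => ((ρ q : ℝ) : ℂ)) z j) p :=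
    fun j => diff_of_cd (cd_wirtZbar hρc)
  have hRz : ∀ j : Fin 2, DifferentiableAt ℝ
      (fun z => wirtZ (fun q => ((ρ q : ℝ) : ℂ)) z j) p :=
    fun j => diff_of_cd (cd_wirtZ hρc)
  have hW : ∀ j : Fin 2, DifferentiableAt ℝ (fun z => wC ρ z j) p :=
    fun j => diff_of_cd (cd_wC hρ hden j)
  have hdend : DifferentiableAt ℝ
      (fun z => (∑ k, z k * wirtZ (fun q => ((ρ q : ℝ) : ℂ)) z k)) p :=
    diff_of_cd (cd_den hρ)
  -- (1)  X applied to the α-tangency identity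
  have hgαd : DifferentiableAt ℝ (fun z => α z 0 * wirtZbar (fun q => ((ρ q : ℝ) : ℂ)) z 0
      + α z 1 * wirtZbar (fun q => ((ρ q : ℝ) : ℂ)) z 1) p :=
    ((hA 0).mul (hRb 0)).add ((hA 1).mul (hRb 1))
  have X1 := tangential_vanish hρ hS hgαd hαtan hp hDρp
    ![0, 0] ![b p 0, b p 1] (by
      simp only [Matrix.cons_val_zero, Matrix.cons_val_one, Matrix.head_cons]
      linear_combination hbtan p hp)
  simp only [Matrix.cons_val_zero, Matrix.cons_val_one, Matrix.head_cons, zero_mul,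
    zero_add] at X1
  rw [wirtZbar_comb2 (hA 0) (hA 1) (hRb 0) (hRb 1),
    wirtZbar_comb2 (hA 0) (hA 1) (hRb 0) (hRb 1)] at X1
  -- (2)  T applied to the b-tangency identity
  have hgβd : DifferentiableAt ℝ (fun z => b z 0 * wirtZbar (fun q => ((ρ q : ℝ) : ℂ)) z 0
      + b z 1 * wirtZbar (fun q => ((ρ q : ℝ) : ℂ)) z 1) p :=
    ((hB 0).mul (hRb 0)).add ((hB 1).mul (hRb 1))
  have T2 := tangential_vanish hρ hS hgβd hbtan hp hDρp
    ![wC ρ p 1, -(wC ρ p 0)] ![α p 0, α p 1] (by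
      simp only [Matrix.cons_val_zero, Matrix.cons_val_one, Matrix.head_cons]
      linear_combination t_tangent hden (hαtan p hp))
  simp only [Matrix.cons_val_zero, Matrix.cons_val_one, Matrix.head_cons] at T2
  rw [wirtZ_comb2 (hB 0) (hB 1) (hRb 0) (hRb 1),
    wirtZ_comb2 (hB 0) (hB 1) (hRb 0) (hRb 1),
    wirtZbar_comb2 (hB 0) (hB 1) (hRb 0) (hRb 1),
    wirtZbar_comb2 (hB 0) (hB 1) (hRb 0) (hRb 1)] at T2
  -- (4)  w₁·X(∂₀ρ) − w₀·X(∂₁ρ) = den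
  have hK : ∀ j k : Fin 2, wirtZbar (fun z => wirtZ (fun q => ((ρ q : ℝ) : ℂ)) z j) p k
      = wC ρ p j * wirtZbar (fun z => (∑ i, z i * wirtZ (fun q => ((ρ q : ℝ) : ℂ)) z i)) p k
        + wirtZbar (fun z => wC ρ z j) p k
          * (∑ i, p i * wirtZ (fun q => ((ρ q : ℝ) : ℂ)) p i) := by
    intro j k
    rw [wirtZbar_congr (num_ev_eq hρ hden j), wirtZbar_mul (hW j) hdend]
  have hXw1p' : b p 0 * wirtZbar (fun z => wC ρ z 0) p 0
      + b p 1 * wirtZbar (fun z => wC ρ z 0) p 1 = p 1 := hXw1p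
  have hXw2p' : b p 0 * wirtZbar (fun z => wC ρ z 1) p 0
      + b p 1 * wirtZbar (fun z => wC ρ z 1) p 1 = -(p 0) := hXw2p
  have key4 : wC ρ p 1 * (b p 0 * wirtZbar (fun z => wirtZ (fun q => ((ρ q : ℝ) : ℂ)) z 0) p 0
        + b p 1 * wirtZbar (fun z => wirtZ (fun q => ((ρ q : ℝ) : ℂ)) z 0) p 1)
      - wC ρ p 0 * (b p 0 * wirtZbar (fun z => wirtZ (fun q => ((ρ q : ℝ) : ℂ)) z 1) p 0
        + b p 1 * wirtZbar (fun z => wirtZ (fun q => ((ρ q : ℝ) : ℂ)) z 1) p 1)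
      = (∑ k, p k * wirtZ (fun q => ((ρ q : ℝ) : ℂ)) p k) := by
    rw [hK 0 0, hK 0 1, hK 1 0, hK 1 1]
    have hpw := sumpw (ρ := ρ) hden
    linear_combination (wC ρ p 1 * (∑ k, p k * wirtZ (fun q => ((ρ q : ℝ) : ℂ)) p k)) * hXw1p'
      - (wC ρ p 0 * (∑ k, p k * wirtZ (fun q => ((ρ q : ℝ) : ℂ)) p k)) * hXw2p'
      + (∑ k, p k * wirtZ (fun q => ((ρ q : ℝ) : ℂ)) p k) * hpw
  -- assemble
  have hXa : ∀ j : Fin 2, Xop2 b (fun z => α z j) p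
      = b p 0 * wirtZbar (fun z => α z j) p 0 + b p 1 * wirtZbar (fun z => α z j) p 1 :=
    fun j => rfl
  have hTb : ∀ j : Fin 2, Top2 ρ α (fun z => b z j) p
      = wC ρ p 1 * wirtZ (fun z => b z j) p 0 - wC ρ p 0 * wirtZ (fun z => b z j) p 1
        + α p 0 * wirtZbar (fun z => b z j) p 0 + α p 1 * wirtZbar (fun z => b z j) p 1 :=
    fun j => rfl
  rw [hXa 0, hXa 1, hTb 0, hTb 1]
  -- orient mixed second derivatives
  have comm1' : ∀ j k : Fin 2,
      wirtZ (fun q => wirtZbar (fun x => ((ρ x : ℝ) : ℂ)) q k) p j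
        = wirtZbar (fun q => wirtZ (fun x => ((ρ x : ℝ) : ℂ)) q j) p k :=
    fun j k => (wirt_comm1 hρc).symm
  have comm2' : wirtZbar (fun q => wirtZbar (fun x => ((ρ x : ℝ) : ℂ)) q 0) p 1
      = wirtZbar (fun q => wirtZbar (fun x => ((ρ x : ℝ) : ℂ)) q 1) p 0 :=
    wirt_comm2 hρc
  rw [comm1' 0 0, comm1' 0 1, comm1' 1 0, comm1' 1 1, comm2'] at T2
  rw [comm2'] at X1
  linear_combination X1 - T2 + key4
end PartD
section PartE
variable {ρ : E2 → ℝ} {α b : E2 → Fin 2 → ℂ} {p : E2} {S : Set E2}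

/-- X(T w_j)(p) = 0 for p ∈ S. -/
lemma keyXT (hρ : ContDiff ℝ ((⊤:ℕ∞)) ρ) (hS : S = ρ ⁻¹' {0})
    (hα : ContDiff ℝ ((⊤:ℕ∞)) α) (hb : ContDiff ℝ ((⊤:ℕ∞)) b)
    (hp : p ∈ S) (hDρp : fderiv ℝ ρ p ≠ 0)
    (hden : (∑ k, p k * wirtZ (fun q => ((ρ q : ℝ) : ℂ)) p k) ≠ 0)
    (hbtanp : b p 0 * wirtZbar (fun x => ((ρ x : ℝ) : ℂ)) p 0
      + b p 1 * wirtZbar (fun x => ((ρ x : ℝ) : ℂ)) p 1 = 0)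
    (j : Fin 2) (hTwS : ∀ q ∈ S, Top2 ρ α (fun z => wC ρ z j) q = 0) :
    Xop2 b (Top2 ρ α (fun z => wC ρ z j)) p = 0 := by
  have hWcd : ∀ i : Fin 2, ContDiffAt ℝ ((⊤:ℕ∞)) (fun z => wC ρ z i) p := cd_wC hρ hden
  have hW : ∀ i : Fin 2, DifferentiableAt ℝ (fun z => wC ρ z i) p :=
    fun i => diff_of_cd (hWcd i)
  have hA : ∀ i : Fin 2, DifferentiableAt ℝ (fun z => α z i) p :=
    fun i => ((contDiff_pi.1 hα i).differentiable (by norm_cast)).differentiableAt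
  have hZW : ∀ i : Fin 2, DifferentiableAt ℝ (fun z => wirtZ (fun q => wC ρ q j) z i) p :=
    fun i => diff_of_cd (cd_wirtZ (hWcd j))
  have hZbW : ∀ i : Fin 2, DifferentiableAt ℝ (fun z => wirtZbar (fun q => wC ρ q j) z i) p :=
    fun i => diff_of_cd (cd_wirtZbar (hWcd j))
  have hTd : DifferentiableAt ℝ (Top2 ρ α (fun z => wC ρ z j)) p :=
    ((((hW 1).mul (hZW 0)).sub ((hW 0).mul (hZW 1))).add ((hA 0).mul (hZbW 0))).add
      ((hA 1).mul (hZbW 1))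
  have XT := tangential_vanish hρ hS hTd hTwS hp hDρp
    ![0, 0] ![b p 0, b p 1] (by
      simp only [Matrix.cons_val_zero, Matrix.cons_val_one, Matrix.head_cons]
      linear_combination hbtanp)
  simp only [Matrix.cons_val_zero, Matrix.cons_val_one, Matrix.head_cons, zero_mul,
    zero_add] at XT
  exact XT

/-- T(X w₁)(p) = -w₁(p) for p ∈ S. -/
lemma keyTX0 (hρ : ContDiff ℝ ((⊤:ℕ∞)) ρ) (hS : S = ρ ⁻¹' {0})
    (hα : ContDiff ℝ ((⊤:ℕ∞)) α) (hb : ContDiff ℝ ((⊤:ℕ∞)) b)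
    (hp : p ∈ S) (hDρp : fderiv ℝ ρ p ≠ 0)
    (hden : (∑ k, p k * wirtZ (fun q => ((ρ q : ℝ) : ℂ)) p k) ≠ 0)
    (hαtanp : α p 0 * wirtZbar (fun x => ((ρ x : ℝ) : ℂ)) p 0
      + α p 1 * wirtZbar (fun x => ((ρ x : ℝ) : ℂ)) p 1 = 0)
    (hXw1S : ∀ q ∈ S, Xop2 b (fun z => wC ρ z 0) q = q 1) :
    Top2 ρ α (Xop2 b (fun z => wC ρ z 0)) p = -(wC ρ p 0) := by
  have hWcd : ∀ i : Fin 2, ContDiffAt ℝ ((⊤:ℕ∞)) (fun z => wC ρ z i) p := cd_wC hρ hden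
  have hB : ∀ i : Fin 2, DifferentiableAt ℝ (fun z => b z i) p :=
    fun i => ((contDiff_pi.1 hb i).differentiable (by norm_cast)).differentiableAt
  have hZbW : ∀ i : Fin 2, DifferentiableAt ℝ (fun z => wirtZbar (fun q => wC ρ q 0) z i) p :=
    fun i => diff_of_cd (cd_wirtZbar (hWcd 0))
  have hXd : DifferentiableAt ℝ (Xop2 b (fun q => wC ρ q 0)) p :=
    ((hB 0).mul (hZbW 0)).add ((hB 1).mul (hZbW 1))
  have hgd : DifferentiableAt ℝ (fun z => Xop2 b (fun q => wC ρ q 0) z - z 1) p :=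
    hXd.sub differentiableAt_coord
  have hg0 : ∀ q ∈ S, Xop2 b (fun q' => wC ρ q' 0) q - q 1 = 0 := fun q hq => by
    rw [hXw1S q hq]; ring
  have TX := tangential_vanish hρ hS hgd hg0 hp hDρp
    ![wC ρ p 1, -(wC ρ p 0)] ![α p 0, α p 1] (by
      simp only [Matrix.cons_val_zero, Matrix.cons_val_one, Matrix.head_cons]
      linear_combination t_tangent hden hαtanp)
  simp only [Matrix.cons_val_zero, Matrix.cons_val_one, Matrix.head_cons] at TX
  rw [wirtZ_sub hXd differentiableAt_coord, wirtZ_sub hXd differentiableAt_coord,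
    wirtZbar_sub hXd differentiableAt_coord, wirtZbar_sub hXd differentiableAt_coord,
    wirtZ_coord, wirtZ_coord, wirtZbar_coord, wirtZbar_coord] at TX
  norm_num at TX
  have hTB : Top2 ρ α (Xop2 b (fun q => wC ρ q 0)) p
      = wC ρ p 1 * wirtZ (Xop2 b (fun q => wC ρ q 0)) p 0
        - wC ρ p 0 * wirtZ (Xop2 b (fun q => wC ρ q 0)) p 1
        + α p 0 * wirtZbar (Xop2 b (fun q => wC ρ q 0)) p 0
        + α p 1 * wirtZbar (Xop2 b (fun q => wC ρ q 0)) p 1 := rfl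
  rw [hTB]
  linear_combination TX

/-- T(X w₂)(p) = -w₂(p) for p ∈ S. -/
lemma keyTX1 (hρ : ContDiff ℝ ((⊤:ℕ∞)) ρ) (hS : S = ρ ⁻¹' {0})
    (hα : ContDiff ℝ ((⊤:ℕ∞)) α) (hb : ContDiff ℝ ((⊤:ℕ∞)) b)
    (hp : p ∈ S) (hDρp : fderiv ℝ ρ p ≠ 0)
    (hden : (∑ k, p k * wirtZ (fun q => ((ρ q : ℝ) : ℂ)) p k) ≠ 0)
    (hαtanp : α p 0 * wirtZbar (fun x => ((ρ x : ℝ) : ℂ)) p 0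
      + α p 1 * wirtZbar (fun x => ((ρ x : ℝ) : ℂ)) p 1 = 0)
    (hXw2S : ∀ q ∈ S, Xop2 b (fun z => wC ρ z 1) q = -(q 0)) :
    Top2 ρ α (Xop2 b (fun z => wC ρ z 1)) p = -(wC ρ p 1) := by
  have hWcd : ∀ i : Fin 2, ContDiffAt ℝ ((⊤:ℕ∞)) (fun z => wC ρ z i) p := cd_wC hρ hden
  have hB : ∀ i : Fin 2, DifferentiableAt ℝ (fun z => b z i) p :=
    fun i => ((contDiff_pi.1 hb i).differentiable (by norm_cast)).differentiableAt
  have hZbW : ∀ i : Fin 2, DifferentiableAt ℝ (fun z => wirtZbar (fun q => wC ρ q 1) z i) p :=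
    fun i => diff_of_cd (cd_wirtZbar (hWcd 1))
  have hXd : DifferentiableAt ℝ (Xop2 b (fun q => wC ρ q 1)) p :=
    ((hB 0).mul (hZbW 0)).add ((hB 1).mul (hZbW 1))
  have hgd : DifferentiableAt ℝ (fun z => Xop2 b (fun q => wC ρ q 1) z + z 0) p :=
    hXd.add differentiableAt_coord
  have hg0 : ∀ q ∈ S, Xop2 b (fun q' => wC ρ q' 1) q + q 0 = 0 := fun q hq => by
    rw [hXw2S q hq]; ring
  have TX := tangential_vanish hρ hS hgd hg0 hp hDρp
    ![wC ρ p 1, -(wC ρ p 0)] ![α p 0, α p 1] (by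
      simp only [Matrix.cons_val_zero, Matrix.cons_val_one, Matrix.head_cons]
      linear_combination t_tangent hden hαtanp)
  simp only [Matrix.cons_val_zero, Matrix.cons_val_one, Matrix.head_cons] at TX
  rw [wirtZ_add hXd differentiableAt_coord, wirtZ_add hXd differentiableAt_coord,
    wirtZbar_add hXd differentiableAt_coord, wirtZbar_add hXd differentiableAt_coord,
    wirtZ_coord, wirtZ_coord, wirtZbar_coord, wirtZbar_coord] at TX
  norm_num at TX
  have hTB : Top2 ρ α (Xop2 b (fun q => wC ρ q 1)) p
      = wC ρ p 1 * wirtZ (Xop2 b (fun q => wC ρ q 1)) p 0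
        - wC ρ p 0 * wirtZ (Xop2 b (fun q => wC ρ q 1)) p 1
        + α p 0 * wirtZbar (Xop2 b (fun q => wC ρ q 1)) p 0
        + α p 1 * wirtZbar (Xop2 b (fun q => wC ρ q 1)) p 1 := rfl
  rw [hTB]
  linear_combination TX
end PartE
theorem differential_decomposition
    (ρ : (Fin 2 → ℂ) → ℝ) (hρ : ContDiff ℝ (⊤ : ℕ∞) ρ)
    (S : Set (Fin 2 → ℂ)) (hSdef : S = ρ ⁻¹' {0}) (hSne : S.Nonempty)
    (hDρ : ∀ p ∈ S, fderiv ℝ ρ p ≠ 0)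
    (hsum : ∀ p ∈ S, (∑ k, p k * wirtZ (fun q => (ρ q : ℂ)) p k) ≠ 0)
    (α b : (Fin 2 → ℂ) → Fin 2 → ℂ)
    (hα : ContDiff ℝ (⊤ : ℕ∞) α) (hb : ContDiff ℝ (⊤ : ℕ∞) b)
    (hαtan : ∀ p ∈ S,
      α p 0 * wirtZbar (fun q => (ρ q : ℂ)) p 0 + α p 1 * wirtZbar (fun q => (ρ q : ℂ)) p 1 = 0)
    (hbtan : ∀ p ∈ S,
      b p 0 * wirtZbar (fun q => (ρ q : ℂ)) p 0 + b p 1 * wirtZbar (fun q => (ρ q : ℂ)) p 1 = 0)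
    (hTw1 : ∀ p ∈ S, Top2 ρ α (fun z => wC ρ z 0) p = 0)
    (hTw2 : ∀ p ∈ S, Top2 ρ α (fun z => wC ρ z 1) p = 0)
    (hXw1 : ∀ p ∈ S, Xop2 b (fun z => wC ρ z 0) p = p 1)
    (hXw2 : ∀ p ∈ S, Xop2 b (fun z => wC ρ z 1) p = -(p 0))
    : ∀ u : (Fin 2 → ℂ) → ℂ, ContDiff ℝ (⊤ : ℕ∞) u → ∀ p ∈ S, ∀ v : Fin 2 → ℂ,
      fderiv ℝ ρ p v = 0 →
      fderiv ℝ u p v =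
        Top2 ρ α u p * etaP p v + Xop2 b u p * etaPP ρ p v + Ups2 ρ α b u p * thetaF ρ p v := by
  intro u hu p hp v hv
  have hden := hsum p hp
  have hDρp := hDρ p hp
  have hρd : DifferentiableAt ℝ ρ p := (hρ.differentiable (by norm_cast)).differentiableAt
  have hαp := hαtan p hp
  have hbp := hbtan p hp
  have hWcd : ∀ i : Fin 2, ContDiffAt ℝ ((⊤:ℕ∞)) (fun z => wC ρ z i) p := cd_wC hρ hden
  -- Υ(w_j) = w_j and its expansion
  have hXT0 := keyXT hρ hSdef hα hb hp hDρp hden hbp 0 hTw1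
  have hXT1 := keyXT hρ hSdef hα hb hp hDρp hden hbp 1 hTw2
  have hTX0 := keyTX0 hρ hSdef hα hb hp hDρp hden hαp hXw1
  have hTX1 := keyTX1 hρ hSdef hα hb hp hDρp hden hαp hXw2
  have hUw0 : Ups2 ρ α b (fun z => wC ρ z 0) p = wC ρ p 0 := by
    have e : Ups2 ρ α b (fun z => wC ρ z 0) p
        = Xop2 b (Top2 ρ α (fun z => wC ρ z 0)) p
          - Top2 ρ α (Xop2 b (fun z => wC ρ z 0)) p := rfl
    rw [e, hXT0, hTX0]; ring
  have hUw1 : Ups2 ρ α b (fun z => wC ρ z 1) p = wC ρ p 1 := by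
    have e : Ups2 ρ α b (fun z => wC ρ z 1) p
        = Xop2 b (Top2 ρ α (fun z => wC ρ z 1)) p
          - Top2 ρ α (Xop2 b (fun z => wC ρ z 1)) p := rfl
    rw [e, hXT1, hTX1]; ring
  have hY0 : -(p 0) * wirtZ (fun z => wC ρ z 0) p 0 - p 1 * wirtZ (fun z => wC ρ z 0) p 1
      + (Xop2 b (fun z => α z 0) p - Top2 ρ α (fun z => b z 0) p)
        * wirtZbar (fun z => wC ρ z 0) p 0
      + (Xop2 b (fun z => α z 1) p - Top2 ρ α (fun z => b z 1) p)
        * wirtZbar (fun z => wC ρ z 0) p 1 = wC ρ p 0 := by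
    rw [← ups2_expand hρ hα hb hden (hXw1 p hp) (hXw2 p hp) _ (hWcd 0)]; exact hUw0
  have hY1 : -(p 0) * wirtZ (fun z => wC ρ z 1) p 0 - p 1 * wirtZ (fun z => wC ρ z 1) p 1
      + (Xop2 b (fun z => α z 0) p - Top2 ρ α (fun z => b z 0) p)
        * wirtZbar (fun z => wC ρ z 1) p 0
      + (Xop2 b (fun z => α z 1) p - Top2 ρ α (fun z => b z 1) p)
        * wirtZbar (fun z => wC ρ z 1) p 1 = wC ρ p 1 := by
    rw [← ups2_expand hρ hα hb hden (hXw1 p hp) (hXw2 p hp) _ (hWcd 1)]; exact hUw1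
  -- remaining identities
  have hc := keyC hρ hSdef hα hb hp hDρp hden hαtan hbtan (hXw1 p hp) (hXw2 p hp)
  have hU := ups2_expand hρ hα hb hden (hXw1 p hp) (hXw2 p hp) u hu.contDiffAt
  have hpw := sumpw (ρ := ρ) hden
  have hvtan : wirtZ (fun q => ((ρ q : ℝ) : ℂ)) p 0 * v 0
      + wirtZ (fun q => ((ρ q : ℝ) : ℂ)) p 1 * v 1
      + wirtZbar (fun q => ((ρ q : ℝ) : ℂ)) p 0 * (starRingEnd ℂ) (v 0)
      + wirtZbar (fun q => ((ρ q : ℝ) : ℂ)) p 1 * (starRingEnd ℂ) (v 1) = 0 := by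
    have h0 : fderiv ℝ (fun q => ((ρ q : ℝ) : ℂ)) p v = 0 := by
      rw [fderiv_realToComplex hρd v, hv]; simp
    rw [← fderiv_wirt]; exact h0
  have wd0 : wC ρ p 0 * (∑ k, p k * wirtZ (fun q => ((ρ q : ℝ) : ℂ)) p k)
      = wirtZ (fun q => ((ρ q : ℝ) : ℂ)) p 0 := div_mul_cancel₀ _ hden
  have wd1 : wC ρ p 1 * (∑ k, p k * wirtZ (fun q => ((ρ q : ℝ) : ℂ)) p k)
      = wirtZ (fun q => ((ρ q : ℝ) : ℂ)) p 1 := div_mul_cancel₀ _ hden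
  have hTW0 := hTw1 p hp
  have hTW1 := hTw2 p hp
  have hXW0 := hXw1 p hp
  have hXW1 := hXw2 p hp
  have hconj0 := wirtZbar_real_conj (ρ := ρ) hρd 0
  have hconj1 := wirtZbar_real_conj (ρ := ρ) hρd 1
  -- rewrite the goal into atoms
  rw [fderiv_wirt u p v, hU]
  have eTop : Top2 ρ α u p = wC ρ p 1 * wirtZ u p 0 - wC ρ p 0 * wirtZ u p 1
      + α p 0 * wirtZbar u p 0 + α p 1 * wirtZbar u p 1 := rfl
  have eXop : Xop2 b u p = b p 0 * wirtZbar u p 0 + b p 1 * wirtZbar u p 1 := rfl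
  have eEta : etaP p v = p 1 * v 0 - p 0 * v 1 := rfl
  have eTheta : thetaF ρ p v = -(wC ρ p 0) * v 0 - wC ρ p 1 * v 1 := rfl
  have eEtaPP : etaPP ρ p v = wC ρ p 1 * fderiv ℝ (fun q => wC ρ q 0) p v
      - wC ρ p 0 * fderiv ℝ (fun q => wC ρ q 1) p v := rfl
  rw [eTop, eXop, eEta, eTheta, eEtaPP, fderiv_wirt (fun q => wC ρ q 0) p v,
    fderiv_wirt (fun q => wC ρ q 1) p v]
  -- unfold the Top2/Xop2 in the S-hypotheses at p
  have hTW0' : wC ρ p 1 * wirtZ (fun z => wC ρ z 0) p 0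
      - wC ρ p 0 * wirtZ (fun z => wC ρ z 0) p 1
      + α p 0 * wirtZbar (fun z => wC ρ z 0) p 0
      + α p 1 * wirtZbar (fun z => wC ρ z 0) p 1 = 0 := hTW0
  have hTW1' : wC ρ p 1 * wirtZ (fun z => wC ρ z 1) p 0
      - wC ρ p 0 * wirtZ (fun z => wC ρ z 1) p 1
      + α p 0 * wirtZbar (fun z => wC ρ z 1) p 0
      + α p 1 * wirtZbar (fun z => wC ρ z 1) p 1 = 0 := hTW1
  have hXW0' : b p 0 * wirtZbar (fun z => wC ρ z 0) p 0
      + b p 1 * wirtZbar (fun z => wC ρ z 0) p 1 = p 1 := hXW0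
  have hXW1' : b p 0 * wirtZbar (fun z => wC ρ z 1) p 0
      + b p 1 * wirtZbar (fun z => wC ρ z 1) p 1 = -(p 0) := hXW1
  clear hTW0 hTW1 hXW0 hXW1 hU hUw0 hUw1 hXT0 hXT1 hTX0 hTX1
  -- abbreviations
  set w0 := wC ρ p 0 with hw0
  set w1 := wC ρ p 1 with hw1
  set a0 := α p 0 with ha0
  set a1 := α p 1 with ha1
  set b0 := b p 0 with hb0
  set b1 := b p 1 with hb1
  set Z0 := wirtZ u p 0 with hZ0
  set Z1 := wirtZ u p 1 with hZ1
  set B0 := wirtZbar u p 0 with hB0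
  set B1 := wirtZbar u p 1 with hB1
  set cv0 := (starRingEnd ℂ) (v 0) with hcv0
  set cv1 := (starRingEnd ℂ) (v 1) with hcv1
  set d0 := wirtZ (fun q => ((ρ q : ℝ) : ℂ)) p 0 with hd0
  set d1 := wirtZ (fun q => ((ρ q : ℝ) : ℂ)) p 1 with hd1
  set e0 := wirtZbar (fun q => ((ρ q : ℝ) : ℂ)) p 0 with he0
  set e1 := wirtZbar (fun q => ((ρ q : ℝ) : ℂ)) p 1 with he1
  set dn := (∑ k, p k * wirtZ (fun q => ((ρ q : ℝ) : ℂ)) p k) with hdn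
  set DW00 := wirtZ (fun z => wC ρ z 0) p 0 with hDW00
  set DW01 := wirtZ (fun z => wC ρ z 0) p 1 with hDW01
  set DW10 := wirtZ (fun z => wC ρ z 1) p 0 with hDW10
  set DW11 := wirtZ (fun z => wC ρ z 1) p 1 with hDW11
  set EW00 := wirtZbar (fun z => wC ρ z 0) p 0 with hEW00
  set EW01 := wirtZbar (fun z => wC ρ z 0) p 1 with hEW01
  set EW10 := wirtZbar (fun z => wC ρ z 1) p 0 with hEW10
  set EW11 := wirtZbar (fun z => wC ρ z 1) p 1 with hEW11
  set c0 := Xop2 b (fun z => α z 0) p - Top2 ρ α (fun z => b z 0) p with hc0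
  set c1 := Xop2 b (fun z => α z 1) p - Top2 ρ α (fun z => b z 1) p with hc1
  -- nondegeneracy of (e0, e1)
  have hene : e0 ≠ 0 ∨ e1 ≠ 0 := by
    by_cases h0 : d0 = 0
    · right
      have h1 : d1 ≠ 0 := by
        intro h1
        apply hden
        rw [hdn, den_eq p]
        rw [← hd0, ← hd1, h0, h1]; ring
      rw [hconj1]
      intro h; exact h1 (by simpa using congrArg (starRingEnd ℂ) h)
    · left
      rw [hconj0]
      intro h; exact h0 (by simpa using congrArg (starRingEnd ℂ) h)
  -- the two linear functionals annihilating (Za0, Za1)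
  have eqE1 : (a0 * (p 1 * v 0 - p 0 * v 1)
        + b0 * (w1 * (DW00 * v 0 + DW01 * v 1 + EW00 * cv0 + EW01 * cv1)
          - w0 * (DW10 * v 0 + DW11 * v 1 + EW10 * cv0 + EW11 * cv1))
        + c0 * (-w0 * v 0 - w1 * v 1) - cv0) * e0
      + (a1 * (p 1 * v 0 - p 0 * v 1)
        + b1 * (w1 * (DW00 * v 0 + DW01 * v 1 + EW00 * cv0 + EW01 * cv1)
          - w0 * (DW10 * v 0 + DW11 * v 1 + EW10 * cv0 + EW11 * cv1))
        + c1 * (-w0 * v 0 - w1 * v 1) - cv1) * e1 = 0 := by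
    linear_combination (p 1 * v 0 - p 0 * v 1) * hαp
      + (w1 * (DW00 * v 0 + DW01 * v 1 + EW00 * cv0 + EW01 * cv1)
        - w0 * (DW10 * v 0 + DW11 * v 1 + EW10 * cv0 + EW11 * cv1)) * hbp
      + (-w0 * v 0 - w1 * v 1) * hc - hvtan - v 0 * wd0 - v 1 * wd1
  have eqE2 : (w1 * EW00 - w0 * EW10) * (a0 * (p 1 * v 0 - p 0 * v 1)
        + b0 * (w1 * (DW00 * v 0 + DW01 * v 1 + EW00 * cv0 + EW01 * cv1)
          - w0 * (DW10 * v 0 + DW11 * v 1 + EW10 * cv0 + EW11 * cv1))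
        + c0 * (-w0 * v 0 - w1 * v 1) - cv0)
      + (w1 * EW01 - w0 * EW11) * (a1 * (p 1 * v 0 - p 0 * v 1)
        + b1 * (w1 * (DW00 * v 0 + DW01 * v 1 + EW00 * cv0 + EW01 * cv1)
          - w0 * (DW10 * v 0 + DW11 * v 1 + EW10 * cv0 + EW11 * cv1))
        + c1 * (-w0 * v 0 - w1 * v 1) - cv1) = 0 := by
    linear_combination (p 1 * v 0 - p 0 * v 1) * (w1 * hTW0' - w0 * hTW1')
      + (w1 * (DW00 * v 0 + DW01 * v 1 + EW00 * cv0 + EW01 * cv1)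
        - w0 * (DW10 * v 0 + DW11 * v 1 + EW10 * cv0 + EW11 * cv1))
          * (w1 * hXW0' - w0 * hXW1')
      + (-w0 * v 0 - w1 * v 1) * (w1 * hY0 - w0 * hY1)
      + (w1 * cv1 * EW01 + w1 * cv0 * EW00 - w0 * cv1 * EW11 - w0 * cv0 * EW10) * hpw
  have hXb : (w1 * EW00 - w0 * EW10) * b0 + (w1 * EW01 - w0 * EW11) * b1 = 1 := by
    linear_combination w1 * hXW0' - w0 * hXW1' + hpw
  have cross : (a0 * (p 1 * v 0 - p 0 * v 1)
        + b0 * (w1 * (DW00 * v 0 + DW01 * v 1 + EW00 * cv0 + EW01 * cv1)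
          - w0 * (DW10 * v 0 + DW11 * v 1 + EW10 * cv0 + EW11 * cv1))
        + c0 * (-w0 * v 0 - w1 * v 1) - cv0) * b1
      - (a1 * (p 1 * v 0 - p 0 * v 1)
        + b1 * (w1 * (DW00 * v 0 + DW01 * v 1 + EW00 * cv0 + EW01 * cv1)
          - w0 * (DW10 * v 0 + DW11 * v 1 + EW10 * cv0 + EW11 * cv1))
        + c1 * (-w0 * v 0 - w1 * v 1) - cv1) * b0 = 0 := by
    rcases hene with he | he
    · have h : ((a0 * (p 1 * v 0 - p 0 * v 1)
          + b0 * (w1 * (DW00 * v 0 + DW01 * v 1 + EW00 * cv0 + EW01 * cv1)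
            - w0 * (DW10 * v 0 + DW11 * v 1 + EW10 * cv0 + EW11 * cv1))
          + c0 * (-w0 * v 0 - w1 * v 1) - cv0) * b1
        - (a1 * (p 1 * v 0 - p 0 * v 1)
          + b1 * (w1 * (DW00 * v 0 + DW01 * v 1 + EW00 * cv0 + EW01 * cv1)
            - w0 * (DW10 * v 0 + DW11 * v 1 + EW10 * cv0 + EW11 * cv1))
          + c1 * (-w0 * v 0 - w1 * v 1) - cv1) * b0) * e0 = 0 := by
        linear_combination b1 * eqE1 - (a1 * (p 1 * v 0 - p 0 * v 1)
          + b1 * (w1 * (DW00 * v 0 + DW01 * v 1 + EW00 * cv0 + EW01 * cv1)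
            - w0 * (DW10 * v 0 + DW11 * v 1 + EW10 * cv0 + EW11 * cv1))
          + c1 * (-w0 * v 0 - w1 * v 1) - cv1) * hbp
      exact (mul_eq_zero.mp h).resolve_right he
    · have h : ((a0 * (p 1 * v 0 - p 0 * v 1)
          + b0 * (w1 * (DW00 * v 0 + DW01 * v 1 + EW00 * cv0 + EW01 * cv1)
            - w0 * (DW10 * v 0 + DW11 * v 1 + EW10 * cv0 + EW11 * cv1))
          + c0 * (-w0 * v 0 - w1 * v 1) - cv0) * b1
        - (a1 * (p 1 * v 0 - p 0 * v 1)
          + b1 * (w1 * (DW00 * v 0 + DW01 * v 1 + EW00 * cv0 + EW01 * cv1)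
            - w0 * (DW10 * v 0 + DW11 * v 1 + EW10 * cv0 + EW11 * cv1))
          + c1 * (-w0 * v 0 - w1 * v 1) - cv1) * b0) * e1 = 0 := by
        linear_combination (-b0) * eqE1 + (a0 * (p 1 * v 0 - p 0 * v 1)
          + b0 * (w1 * (DW00 * v 0 + DW01 * v 1 + EW00 * cv0 + EW01 * cv1)
            - w0 * (DW10 * v 0 + DW11 * v 1 + EW10 * cv0 + EW11 * cv1))
          + c0 * (-w0 * v 0 - w1 * v 1) - cv0) * hbp
      exact (mul_eq_zero.mp h).resolve_right he
  have hZa0 : a0 * (p 1 * v 0 - p 0 * v 1)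
      + b0 * (w1 * (DW00 * v 0 + DW01 * v 1 + EW00 * cv0 + EW01 * cv1)
        - w0 * (DW10 * v 0 + DW11 * v 1 + EW10 * cv0 + EW11 * cv1))
      + c0 * (-w0 * v 0 - w1 * v 1) - cv0 = 0 := by
    linear_combination b0 * eqE2 + (w1 * EW01 - w0 * EW11) * cross
      - (a0 * (p 1 * v 0 - p 0 * v 1)
        + b0 * (w1 * (DW00 * v 0 + DW01 * v 1 + EW00 * cv0 + EW01 * cv1)
          - w0 * (DW10 * v 0 + DW11 * v 1 + EW10 * cv0 + EW11 * cv1))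
        + c0 * (-w0 * v 0 - w1 * v 1) - cv0) * hXb
  have hZa1 : a1 * (p 1 * v 0 - p 0 * v 1)
      + b1 * (w1 * (DW00 * v 0 + DW01 * v 1 + EW00 * cv0 + EW01 * cv1)
        - w0 * (DW10 * v 0 + DW11 * v 1 + EW10 * cv0 + EW11 * cv1))
      + c1 * (-w0 * v 0 - w1 * v 1) - cv1 = 0 := by
    linear_combination b1 * eqE2 - (w1 * EW00 - w0 * EW10) * cross
      - (a1 * (p 1 * v 0 - p 0 * v 1)
        + b1 * (w1 * (DW00 * v 0 + DW01 * v 1 + EW00 * cv0 + EW01 * cv1)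
          - w0 * (DW10 * v 0 + DW11 * v 1 + EW10 * cv0 + EW11 * cv1))
        + c1 * (-w0 * v 0 - w1 * v 1) - cv1) * hXb
  linear_combination (-B0) * hZa0 - B1 * hZa1 + (-(v 0 * Z0) - v 1 * Z1) * hpw
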